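/- Let k be a field of characteristic zero and m a finite-dimensional semisimple Lie algebra over k. Then the Lie subalgebra of the product Lie algebra m × m generated by the set { (−2a, a) : a ∈ m } is all of m × m. -/

import Mathlib

namespace ProdLie

variable {L M : Type*} [LieRing L] [LieRing M]

/-- Componentwise bracket on the product. -/
instance instBracketProd : Bracket (L × M) (L × M) :=
  ⟨fun p q => (⁅p.1, q.1⁆, ⁅p.2, q.2⁆)⟩

theorem prod_bracket (p q : L × M) : ⁅p, q⁆ = (⁅p.1, q.1⁆, ⁅p.2, q.2⁆) := rfl

/-- The direct product Lie ring, with componentwise bracket. -/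
instance instLieRingProd : LieRing (L × M) :=
  { (inferInstance : AddCommGroup (L × M)), instBracketProd with
    add_lie := fun x y z => Prod.ext (add_lie x.1 y.1 z.1) (add_lie x.2 y.2 z.2)
    lie_add := fun x y z => Prod.ext (lie_add x.1 y.1 z.1) (lie_add x.2 y.2 z.2)
    lie_self := fun x => Prod.ext (lie_self x.1) (lie_self x.2)
    leibniz_lie := fun x y z =>
      Prod.ext (leibniz_lie x.1 y.1 z.1) (leibniz_lie x.2 y.2 z.2) }

variable (k : Type*) [CommRing k] [LieAlgebra k L] [LieAlgebra k M]

/-- The direct product Lie algebra. -/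
instance instLieAlgebraProd : LieAlgebra k (L × M) :=
  { (inferInstance : Module k (L × M)) with
    lie_smul := fun t x y => Prod.ext (lie_smul t x.1 y.1) (lie_smul t x.2 y.2) }

end ProdLie

open ProdLie in
/-- for a finite-dimensional semisimple Lie algebra `m` over a field of
characteristic zero, the Lie subalgebra of `m × m` generated by `{(-2a, a) : a ∈ m}`
is all of `m × m`. -/
theorem lieSpan_neg_two_diag_eq_top
    (k : Type*) [Field k] [CharZero k]
    (m : Type*) [LieRing m] [LieAlgebra k m] [Module.Finite k m]
    [LieAlgebra.IsSemisimple k m] :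
    LieSubalgebra.lieSpan k (m × m) {p : m × m | ∃ a : m, p = ((-2 : k) • a, a)} = ⊤ := by

  set S := LieSubalgebra.lieSpan k (m × m) {p : m × m | ∃ a : m, p = ((-2 : k) • a, a)} with hS
  have hd : ∀ a : m, (((-2 : k) • a, a) : m × m) ∈ S :=
    fun a => LieSubalgebra.subset_lieSpan ⟨a, rfl⟩
  -- elements of form (x, 0) with x a bracket are in S
  have key : ∀ a b : m, ((⁅a, b⁆, 0) : m × m) ∈ S := by
    intro a b
    have h1 : (⁅((-2 : k) • a, a), ((-2 : k) • b, b)⁆ : m × m) ∈ S :=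
      S.lie_mem (hd a) (hd b)
    rw [prod_bracket] at h1
    simp only [smul_lie, lie_smul, smul_smul] at h1
    have h2 : (((-2 : k) • ⁅a, b⁆, ⁅a, b⁆) : m × m) ∈ S := hd ⁅a, b⁆
    have h3 : ((((-2 : k) * -2 - -2) • ⁅a, b⁆, (0 : m)) : m × m) ∈ S := by
      have := S.sub_mem h1 h2
      simpa [Prod.mk_sub_mk, sub_smul, add_smul] using this
    have h4 := S.smul_mem (((-2 : k) * -2 - -2)⁻¹) h3
    have h6 : ((-2 : k) * -2 - -2) ≠ 0 := by norm_num
    rw [Prod.smul_mk, smul_smul, inv_mul_cancel₀ h6, one_smul, smul_zero] at h4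
    exact h4
  -- closure under bracket with arbitrary elements: left coordinate ideal
  have lmem : ∀ (x y : m), ((x, (0 : m)) : m × m) ∈ S → ((⁅y, x⁆, 0) : m × m) ∈ S := by
    intro x y hx
    have h1 : (⁅((-2 : k) • y, y), (x, (0 : m))⁆ : m × m) ∈ S := S.lie_mem (hd y) hx
    rw [prod_bracket] at h1
    simp only [smul_lie, lie_zero] at h1
    have h4 := S.smul_mem ((-2 : k)⁻¹) h1
    rw [Prod.smul_mk, smul_smul, inv_mul_cancel₀ (by norm_num : (-2 : k) ≠ 0),
      one_smul, smul_zero] at h4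
    exact h4
  -- the ideal of elements x with (x,0) ∈ S
  let T : LieIdeal k m :=
    { carrier := {x : m | ((x, (0 : m)) : m × m) ∈ S}
      add_mem' := fun {x y} hx hy => by
        have := S.add_mem hx hy
        simpa using this
      zero_mem' := by exact S.zero_mem
      smul_mem' := fun c x hx => by
        have := S.smul_mem c hx
        simpa using this
      lie_mem := fun {x y} hy => lmem y x hy }
  -- T contains the derived ideal, which is everything by semisimplicity
  have hTT : (⊤ : LieIdeal k m) ≤ T := by
    have htop : (⁅(⊤ : LieIdeal k m), (⊤ : LieIdeal k m)⁆ : LieIdeal k m) = ⊤ := by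
      refine le_antisymm le_top ?_
      calc (⊤ : LieIdeal k m) = sSup {I : LieIdeal k m | IsAtom I} :=
            (LieAlgebra.IsSemisimple.sSup_atoms_eq_top (R := k) (L := m)).symm
        _ ≤ ⁅(⊤ : LieIdeal k m), (⊤ : LieIdeal k m)⁆ := ?_
      refine sSup_le fun I hI => ?_
      have h1 : (⁅I, I⁆ : LieIdeal k m) ≤ I := LieSubmodule.lie_le_left I I
      rcases (hI.le_iff.mp h1) with h | h
      · exact absurd ((LieSubmodule.lie_abelian_iff_lie_self_eq_bot I).mpr h)
          (LieAlgebra.IsSemisimple.non_abelian_of_isAtom I hI)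
      · calc I = ⁅I, I⁆ := h.symm
          _ ≤ ⁅(⊤ : LieIdeal k m), (⊤ : LieIdeal k m)⁆ :=
            LieSubmodule.mono_lie le_top le_top
    rw [← htop, LieSubmodule.lieIdeal_oper_eq_span, LieSubmodule.lieSpan_le]
    rintro _ ⟨x, y, rfl⟩
    exact key x y
  have hleft : ∀ x : m, ((x, (0 : m)) : m × m) ∈ S := fun x =>
    hTT (LieSubmodule.mem_top x)
  have hright : ∀ x : m, (((0 : m), x) : m × m) ∈ S := by
    intro x
    have := S.add_mem (hd x) (hleft ((2 : k) • x))
    simpa using this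
  rw [eq_top_iff]
  rintro ⟨x, y⟩ -
  have := S.add_mem (hleft x) (hright y)
  simpa using this
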